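/- For every k ∈ ℝ^N, the determinant of the metric G(k) = Y(k)^T γ Y(k) satisfies det G(k) = det(γ) · (det Sh(C(k)))², where Sh(M) = ∑_{m=0}^∞ M^{2m}/(4^m (2m+1)!). -/

import Mathlib

open Matrix

/-- The matrix `C(k)` with entries `C(k)^A_B = ∑_D k^D C^A_{DB}`. -/
noncomputable def Cmat (N : ℕ) (Cs : Fin N → Fin N → Fin N → ℝ) (k : Fin N → ℝ) :
    Matrix (Fin N) (Fin N) ℝ :=
  Matrix.of fun A B => ∑ D, k D * Cs A D B

/-- The matrix power series `Y(k) = ∑_{m=0}^∞ C(k)^m / (m+1)!`, i.e. `(e^{C(k)} - 1)/C(k)`. -/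
noncomputable def Ymat (N : ℕ) (Cs : Fin N → Fin N → Fin N → ℝ) (k : Fin N → ℝ) :
    Matrix (Fin N) (Fin N) ℝ :=
  ∑' m : ℕ, (((m + 1).factorial : ℝ))⁻¹ • Cmat N Cs k ^ m

/-- The matrix power series `Sh(M) = ∑_{m=0}^∞ M^{2m}/(4^m (2m+1)!)`,
the matrix analogue of `sinh(x/2)/(x/2)`. -/
noncomputable def Sh {n : ℕ} (M : Matrix (Fin n) (Fin n) ℝ) : Matrix (Fin n) (Fin n) ℝ :=
  ∑' m : ℕ, ((4 ^ m * (2 * m + 1).factorial : ℝ))⁻¹ • M ^ (2 * m)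

open Finset

lemma evenOddSplit (f : ℕ → ℝ) (n : ℕ) :
    ∑ i ∈ range (2 * n), f i = ∑ p ∈ range n, (f (2 * p) + f (2 * p + 1)) := by
  induction n with
  | zero => simp
  | succ n ih =>
      rw [show 2 * (n + 1) = (2 * n + 1) + 1 by ring, sum_range_succ, sum_range_succ,
        ih, sum_range_succ]
      ring

lemma altChooseAux (n : ℕ) :
    ∑ i ∈ range (n + 3), (-1 : ℝ) ^ i * ((n + 2).choose i) = 0 := by
  have h0 : (∑ i ∈ range (n + 3), (-1 : ℤ) ^ i * ((n + 2).choose i)) = 0 := by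
    have := Int.alternating_sum_range_choose (n := n + 2)
    simpa using this
  calc ∑ i ∈ range (n + 3), (-1 : ℝ) ^ i * ((n + 2).choose i)
      = ((∑ i ∈ range (n + 3), (-1 : ℤ) ^ i * ((n + 2).choose i) : ℤ) : ℝ) := by push_cast; ring
    _ = 0 := by rw [h0]; simp

lemma altChoose (n : ℕ) :
    ∑ j ∈ range (n + 1), (-1 : ℝ) ^ j * ((n + 2).choose (j + 1)) = 1 + (-1 : ℝ) ^ n := by
  have h := altChooseAux n
  rw [show n + 3 = (n + 2) + 1 from rfl, sum_range_succ' ] at h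
  rw [sum_range_succ] at h
  simp only [Nat.choose_zero_right, Nat.choose_self] at h
  have hpar : ((-1 : ℝ)) ^ (n + 2) = (-1 : ℝ) ^ n := by
    rw [pow_add]; simp
  have : ∀ j, (-1 : ℝ) ^ (j + 1) * ((n + 2).choose (j + 1)) =
      -((-1 : ℝ) ^ j * ((n + 2).choose (j + 1))) := by
    intro j; rw [pow_succ]; ring
  rw [Finset.sum_congr rfl (fun j _ => this j)] at h
  rw [Finset.sum_neg_distrib] at h
  rw [show n+1+1 = n+2 from rfl] at h
  push_cast at h
  rw [hpar] at h
  linarith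

lemma oddChoose (n : ℕ) :
    ∑ p ∈ range (n + 1), ((2 * n + 2).choose (2 * p + 1) : ℝ) = 2 ^ (2 * n + 1) := by
  set f : ℕ → ℝ := fun i => ((2 * n + 2).choose i : ℝ) with hf
  have hA : ∑ i ∈ range (2 * n + 3), f i = 2 ^ (2 * n + 2) := by
    have := Nat.sum_range_choose (2 * n + 2)
    calc ∑ i ∈ range (2 * n + 3), f i
        = ((∑ i ∈ range (2 * n + 2 + 1), (2 * n + 2).choose i : ℕ) : ℝ) := by push_cast; rfl
      _ = 2 ^ (2 * n + 2) := by rw [this]; push_cast; ring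
  have hB : ∑ i ∈ range (2 * n + 3), (-1 : ℝ) ^ i * f i = 0 := by
    have := altChooseAux (2 * n)
    simpa [hf, show 2 * n + 3 = 2 * n + 3 from rfl] using this
  have hg : ∑ i ∈ range (2 * n + 3), (f i - (-1 : ℝ) ^ i * f i) = 2 ^ (2 * n + 2) := by
    rw [Finset.sum_sub_distrib, hA, hB, sub_zero]
  rw [show 2 * n + 3 = 2 * (n + 1) + 1 by ring, sum_range_succ] at hg
  have hlast : f (2 * (n + 1)) - (-1 : ℝ) ^ (2 * (n + 1)) * f (2 * (n + 1)) = 0 := by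
    rw [pow_mul]; norm_num
  rw [hlast, add_zero, evenOddSplit] at hg
  have hterm : ∀ p, (f (2 * p) - (-1 : ℝ) ^ (2 * p) * f (2 * p)) +
      (f (2 * p + 1) - (-1 : ℝ) ^ (2 * p + 1) * f (2 * p + 1)) = 2 * f (2 * p + 1) := by
    intro p; rw [pow_succ, pow_mul]; norm_num; ring
  rw [Finset.sum_congr rfl (fun p _ => hterm p), ← Finset.mul_sum] at hg
  have : (2:ℝ) ^ (2*n+2) = 2 * 2 ^ (2*n+1) := by ring
  rw [this] at hg
  have := mul_left_cancel₀ (two_ne_zero (α := ℝ)) hg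
  simpa [hf] using this

lemma factInvChoose {n k : ℕ} (hk : k ≤ n) :
    (((k + 1).factorial : ℝ))⁻¹ * (((n - k + 1).factorial : ℝ))⁻¹
      = ((n + 2).choose (k + 1)) / ((n + 2).factorial : ℝ) := by
  have h := Nat.choose_mul_factorial_mul_factorial (show k + 1 ≤ n + 2 by omega)
  rw [show n + 2 - (k + 1) = n - k + 1 by omega] at h
  have h' : (((n + 2).choose (k + 1) : ℝ)) * ((k + 1).factorial : ℝ) *
      ((n - k + 1).factorial : ℝ) = ((n + 2).factorial : ℝ) := by exact_mod_cast congrArg Nat.cast h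
  have h1 : ((k + 1).factorial : ℝ) ≠ 0 := by positivity
  have h2 : ((n - k + 1).factorial : ℝ) ≠ 0 := by positivity
  have h3 : ((n + 2).factorial : ℝ) ≠ 0 := by positivity
  field_simp
  linarith [h']

lemma K1 (n : ℕ) :
    ∑ kl ∈ Finset.HasAntidiagonal.antidiagonal n,
      (((kl.1 + 1).factorial : ℝ))⁻¹ * ((-1 : ℝ) ^ kl.2 * (((kl.2 + 1).factorial : ℝ))⁻¹)
    = (1 + (-1 : ℝ) ^ n) / ((n + 2).factorial : ℝ) := by
  rw [Finset.Nat.sum_antidiagonal_eq_sum_range_succ_mk]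
  have hterm : ∀ k ∈ range (n + 1),
      (((k + 1).factorial : ℝ))⁻¹ * ((-1 : ℝ) ^ (n - k) * (((n - k + 1).factorial : ℝ))⁻¹)
      = (-1:ℝ)^n * ((-1 : ℝ) ^ k * (((n + 2).choose (k + 1)) / ((n + 2).factorial : ℝ))) := by
    intro k hk
    have hk' : k ≤ n := by simpa using Nat.lt_succ_iff.mp (mem_range.mp hk)
    have hsign : (-1 : ℝ) ^ (n - k) = (-1 : ℝ) ^ n * (-1 : ℝ) ^ k := by
      have : (-1 : ℝ) ^ (n - k) * (-1 : ℝ) ^ k = (-1 : ℝ) ^ n := by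
        rw [← pow_add]; congr 1; omega
      have hk2 : ((-1 : ℝ) ^ k) * ((-1:ℝ)^k) = 1 := by
        rw [← pow_add, ← two_mul, pow_mul]; norm_num
      calc (-1 : ℝ) ^ (n - k) = (-1 : ℝ) ^ (n - k) * ((-1:ℝ)^k * (-1:ℝ)^k) := by
            rw [hk2, mul_one]
        _ = ((-1 : ℝ) ^ (n - k) * (-1:ℝ)^k) * (-1:ℝ)^k := by ring
        _ = (-1 : ℝ) ^ n * (-1:ℝ)^k := by rw [this]
    rw [hsign, ← factInvChoose hk']
    ring
  rw [Finset.sum_congr rfl hterm, ← Finset.mul_sum]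
  simp only [← mul_div_assoc]
  rw [← Finset.sum_div, altChoose]
  have h2 : ((-1:ℝ)^n) * ((-1:ℝ)^n) = 1 := by rw [← pow_add, ← two_mul, pow_mul]; norm_num
  linear_combination (((n + 2).factorial : ℝ))⁻¹ * h2

lemma K2 (n : ℕ) :
    ∑ pq ∈ Finset.HasAntidiagonal.antidiagonal n,
      ((4 ^ pq.1 * (2 * pq.1 + 1).factorial : ℝ))⁻¹ * ((4 ^ pq.2 * (2 * pq.2 + 1).factorial : ℝ))⁻¹
    = 2 / ((2 * n + 2).factorial : ℝ) := by
  rw [Finset.Nat.sum_antidiagonal_eq_sum_range_succ_mk]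
  have hterm : ∀ k ∈ range (n + 1),
      ((4 ^ k * (2 * k + 1).factorial : ℝ))⁻¹ * ((4 ^ (n - k) * (2 * (n - k) + 1).factorial : ℝ))⁻¹
      = ((4:ℝ) ^ n)⁻¹ * (((2 * n + 2).choose (2 * k + 1) : ℝ) / ((2 * n + 2).factorial : ℝ)) := by
    intro k hk
    have hk' : k ≤ n := by simpa using Nat.lt_succ_iff.mp (mem_range.mp hk)
    have h := Nat.choose_mul_factorial_mul_factorial (show 2 * k + 1 ≤ 2 * n + 2 by omega)
    rw [show 2 * n + 2 - (2 * k + 1) = 2 * (n - k) + 1 by omega] at h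
    have h' : (((2 * n + 2).choose (2 * k + 1) : ℝ)) * ((2 * k + 1).factorial : ℝ) *
        ((2 * (n - k) + 1).factorial : ℝ) = ((2 * n + 2).factorial : ℝ) := by
      exact_mod_cast congrArg Nat.cast h
    have h4 : (4:ℝ) ^ k * (4:ℝ) ^ (n - k) = (4:ℝ) ^ n := by rw [← pow_add]; congr 1; omega
    have h1 : ((2 * k + 1).factorial : ℝ) ≠ 0 := by positivity
    have h2 : ((2 * (n - k) + 1).factorial : ℝ) ≠ 0 := by positivity
    have h3 : ((2 * n + 2).factorial : ℝ) ≠ 0 := by positivity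
    have key : ((2 * k + 1).factorial : ℝ)⁻¹ * ((2 * (n - k) + 1).factorial : ℝ)⁻¹
        = ((2 * n + 2).choose (2 * k + 1) : ℝ) / ((2 * n + 2).factorial : ℝ) := by
      field_simp
      linarith [h']
    calc ((4 ^ k * (2 * k + 1).factorial : ℝ))⁻¹ * ((4 ^ (n - k) * (2 * (n - k) + 1).factorial : ℝ))⁻¹
        = ((4:ℝ)^k)⁻¹ * ((4:ℝ)^(n-k))⁻¹ * (((2 * k + 1).factorial : ℝ)⁻¹ * ((2 * (n - k) + 1).factorial : ℝ)⁻¹) := by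
          rw [mul_inv, mul_inv]; ring
      _ = ((4:ℝ) ^ n)⁻¹ * (((2 * n + 2).choose (2 * k + 1) : ℝ) / ((2 * n + 2).factorial : ℝ)) := by
          rw [← mul_inv, h4, key]
  rw [Finset.sum_congr rfl hterm, ← Finset.mul_sum, ← Finset.sum_div, oddChoose]
  have h3 : ((2 * n + 2).factorial : ℝ) ≠ 0 := by positivity
  have : (4:ℝ) ^ n = 2 ^ (2 * n) := by rw [pow_mul]; norm_num
  field_simp [this]
  rw [this]; ring

section MatrixAux

attribute [local instance] Matrix.linftyOpNormedRing Matrix.linftyOpNormedAlgebra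

variable {d : ℕ} [Nonempty (Fin d)]

lemma coeffY_bound (m : ℕ) : |(((m + 1).factorial : ℝ))⁻¹| ≤ ((m.factorial : ℝ))⁻¹ := by
  rw [abs_of_nonneg (by positivity)]
  apply inv_anti₀ (by positivity)
  exact_mod_cast Nat.factorial_le (Nat.le_succ m)

lemma coeffYneg_bound (m : ℕ) :
    |(-1 : ℝ) ^ m * (((m + 1).factorial : ℝ))⁻¹| ≤ ((m.factorial : ℝ))⁻¹ := by
  rw [abs_mul, abs_pow, abs_neg, abs_one, one_pow, one_mul]
  exact coeffY_bound m

lemma coeffS_bound (m : ℕ) :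
    |((4 ^ m * (2 * m + 1).factorial : ℝ))⁻¹| ≤ ((m.factorial : ℝ))⁻¹ := by
  rw [abs_of_nonneg (by positivity)]
  apply inv_anti₀ (by positivity)
  calc (m.factorial : ℝ) ≤ ((2 * m + 1).factorial : ℝ) := by
        exact_mod_cast Nat.factorial_le (by omega)
    _ ≤ 4 ^ m * ((2 * m + 1).factorial : ℝ) := by
        have h1 : (1:ℝ) ≤ 4 ^ m := one_le_pow₀ (by norm_num)
        have h2 : (0:ℝ) < ((2 * m + 1).factorial : ℝ) := by positivity
        nlinarith

lemma summable_norm_aux (c : ℕ → ℝ) (hc : ∀ m, |c m| ≤ ((m.factorial : ℝ))⁻¹)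
    (M : Matrix (Fin d) (Fin d) ℝ) : Summable fun m => ‖c m • M ^ m‖ := by
  apply Summable.of_nonneg_of_le (fun _ => norm_nonneg _) _
    (Real.summable_pow_div_factorial ‖M‖)
  intro m
  rw [norm_smul, Real.norm_eq_abs]
  calc |c m| * ‖M ^ m‖ ≤ ((m.factorial : ℝ))⁻¹ * ‖M‖ ^ m :=
        mul_le_mul (hc m) (norm_pow_le M m) (norm_nonneg _) (by positivity)
    _ = ‖M‖ ^ m / m.factorial := by rw [div_eq_mul_inv]; ring

lemma cauchy_aux (a b : ℕ → ℝ) (ha : ∀ m, |a m| ≤ ((m.factorial : ℝ))⁻¹)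
    (hb : ∀ m, |b m| ≤ ((m.factorial : ℝ))⁻¹) (M : Matrix (Fin d) (Fin d) ℝ) :
    (∑' m, a m • M ^ m) * (∑' m, b m • M ^ m)
      = ∑' n, (∑ kl ∈ Finset.HasAntidiagonal.antidiagonal n, a kl.1 * b kl.2) • M ^ n := by
  refine Eq.trans (tsum_mul_tsum_eq_tsum_sum_antidiagonal_of_summable_norm
    (summable_norm_aux a ha M) (summable_norm_aux b hb M)) ?_
  apply tsum_congr
  intro n
  rw [Finset.sum_smul]
  apply Finset.sum_congr rfl
  intro kl hkl
  rw [smul_mul_assoc, mul_smul_comm, smul_smul, ← pow_add,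
    Finset.HasAntidiagonal.mem_antidiagonal.mp hkl]

lemma Sh_eq (M : Matrix (Fin d) (Fin d) ℝ) :
    Sh M = ∑' m : ℕ, ((4 ^ m * (2 * m + 1).factorial : ℝ))⁻¹ • (M ^ 2) ^ m := by
  unfold Sh
  exact tsum_congr fun m => by rw [pow_mul]

lemma Sh_neg (M : Matrix (Fin d) (Fin d) ℝ) : Sh (-M) = Sh M := by
  unfold Sh
  exact tsum_congr fun m => by rw [Even.neg_pow (even_two_mul m)]

lemma mainMul (M : Matrix (Fin d) (Fin d) ℝ) :
    (∑' m : ℕ, (((m + 1).factorial : ℝ))⁻¹ • M ^ m) *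
      (∑' m : ℕ, (((m + 1).factorial : ℝ))⁻¹ • (-M) ^ m) = Sh M ^ 2 := by
  have hneg : (fun m : ℕ => (((m + 1).factorial : ℝ))⁻¹ • (-M) ^ m)
      = fun m : ℕ => ((-1 : ℝ) ^ m * (((m + 1).factorial : ℝ))⁻¹) • M ^ m := by
    funext m
    rw [← neg_one_smul ℝ M, smul_pow, smul_smul, mul_comm]
  rw [hneg, cauchy_aux _ _ coeffY_bound coeffYneg_bound]
  have hK1 : ∀ n : ℕ, (∑ kl ∈ Finset.HasAntidiagonal.antidiagonal n,
      (((kl.1 + 1).factorial : ℝ))⁻¹ * ((-1 : ℝ) ^ kl.2 * (((kl.2 + 1).factorial : ℝ))⁻¹))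
      = (1 + (-1 : ℝ) ^ n) / ((n + 2).factorial : ℝ) := K1
  have hL : (∑' n : ℕ, (∑ kl ∈ Finset.HasAntidiagonal.antidiagonal n,
        (((kl.1 + 1).factorial : ℝ))⁻¹ * ((-1 : ℝ) ^ kl.2 * (((kl.2 + 1).factorial : ℝ))⁻¹)) • M ^ n)
      = ∑' n : ℕ, ((1 + (-1 : ℝ) ^ n) / ((n + 2).factorial : ℝ)) • M ^ n := by
    exact tsum_congr fun n => by rw [hK1 n]
  have hmul : ∀ kl : ℕ × ℕ, (((kl.1 + 1).factorial : ℝ))⁻¹ * ((-1 : ℝ) ^ kl.2 *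
      (((kl.2 + 1).factorial : ℝ))⁻¹) = (((kl.1 + 1).factorial : ℝ))⁻¹ *
      ((-1 : ℝ) ^ kl.2 * (((kl.2 + 1).factorial : ℝ))⁻¹) := fun _ => rfl
  rw [hL]
  -- right-hand side
  rw [Sh_eq, sq, cauchy_aux _ _ coeffS_bound coeffS_bound]
  have hR : (∑' n : ℕ, (∑ pq ∈ Finset.HasAntidiagonal.antidiagonal n,
        ((4 ^ pq.1 * (2 * pq.1 + 1).factorial : ℝ))⁻¹ * ((4 ^ pq.2 * (2 * pq.2 + 1).factorial : ℝ))⁻¹)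
          • (M ^ 2) ^ n)
      = ∑' n : ℕ, (2 / ((2 * n + 2).factorial : ℝ)) • (M ^ 2) ^ n := by
    exact tsum_congr fun n => by rw [K2 n]
  rw [hR]
  -- reindex even terms
  have hinj : Function.Injective (fun m : ℕ => 2 * m) := fun a b h => by dsimp at h; omega
  have hsupp : Function.support (fun x : ℕ => ((1 + (-1 : ℝ) ^ x) / ((x + 2).factorial : ℝ)) • M ^ x)
      ⊆ Set.range (fun m : ℕ => 2 * m) := by
    intro x hx
    rcases Nat.even_or_odd x with he | ho
    · obtain ⟨m, hm⟩ := he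
      exact ⟨m, by dsimp; omega⟩
    · exfalso
      apply hx
      dsimp only
      rw [ho.neg_one_pow]
      norm_num
  have := Function.Injective.tsum_eq hinj
    (f := fun x : ℕ => ((1 + (-1 : ℝ) ^ x) / ((x + 2).factorial : ℝ)) • M ^ x) hsupp
  rw [← this]
  exact tsum_congr fun m => by
    have h1 : (-1 : ℝ) ^ (2 * m) = 1 := by rw [pow_mul]; norm_num
    rw [h1, pow_mul]
    norm_num

end MatrixAux

attribute [local instance] Matrix.linftyOpNormedRing Matrix.linftyOpNormedAlgebra

/-- For the bi-invariant metric `G(k) = Y(k)ᵀ γ Y(k)` on the isometry group one has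
`det G(k) = det γ · (det Sh(C(k)))²`. -/
theorem statement1 (N : ℕ) (hN : 1 ≤ N)
    (Cs : Fin N → Fin N → Fin N → ℝ)
    (hanti : ∀ A B C, Cs A B C = - Cs A C B)
    (γ : Matrix (Fin N) (Fin N) ℝ) (hγ : γ.PosDef)
    (had : ∀ A B C, (∑ D, γ A D * Cs D B C) = -(∑ D, γ B D * Cs D A C))
    (k : Fin N → ℝ) :
    ((Ymat N Cs k)ᵀ * γ * Ymat N Cs k).det = γ.det * (Sh (Cmat N Cs k)).det ^ 2 := by
  haveI : Nonempty (Fin N) := ⟨⟨0, hN⟩⟩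
  set C := Cmat N Cs k with hC
  -- γ is symmetric
  have hγs : γᵀ = γ := by
    have h := hγ.1
    rwa [Matrix.IsHermitian, conjTranspose_eq_transpose_of_trivial] at h
  -- γ * C is antisymmetric
  have hanti2 : (γ * C)ᵀ = -(γ * C) := by
    ext A B
    simp only [transpose_apply, neg_apply, mul_apply, hC, Cmat, of_apply]
    have key : ∀ E, (∑ D, γ B D * Cs D E A) = -(∑ D, γ A D * Cs D E B) := by
      intro E
      have h1 := had B E A
      have h2 : (∑ D, γ E D * Cs D B A) = -(∑ D, γ E D * Cs D A B) := by
        rw [← Finset.sum_neg_distrib]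
        exact Finset.sum_congr rfl fun D _ => by rw [hanti D B A]; ring
      have h3 := had E A B
      linarith
    calc ∑ D, γ B D * (∑ E, k E * Cs D E A)
        = ∑ E, k E * (∑ D, γ B D * Cs D E A) := by
          simp only [Finset.mul_sum]
          rw [Finset.sum_comm]
          exact Finset.sum_congr rfl fun E _ => Finset.sum_congr rfl fun D _ => by ring
      _ = ∑ E, k E * -(∑ D, γ A D * Cs D E B) := by
          exact Finset.sum_congr rfl fun E _ => by rw [key E]
      _ = -∑ D, γ A D * (∑ E, k E * Cs D E B) := by
          simp only [Finset.mul_sum, mul_neg, ← Finset.sum_neg_distrib]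
          rw [Finset.sum_comm]
          exact Finset.sum_congr rfl fun E _ => Finset.sum_congr rfl fun D _ => by ring
  have hCg : Cᵀ * γ = -(γ * C) := by
    calc Cᵀ * γ = Cᵀ * γᵀ := by rw [hγs]
      _ = (γ * C)ᵀ := (transpose_mul γ C).symm
      _ = -(γ * C) := hanti2
  have hpow : ∀ m : ℕ, (Cᵀ) ^ m * γ = γ * (-C) ^ m := by
    intro m
    induction m with
    | zero => simp
    | succ m ih =>
        rw [pow_succ', mul_assoc, ih, ← mul_assoc, hCg, ← mul_neg γ C, mul_assoc, ← pow_succ']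
  have hsum1 : Summable fun m : ℕ => (((m + 1).factorial : ℝ))⁻¹ • (Cᵀ) ^ m :=
    (summable_norm_aux _ coeffY_bound _).of_norm
  have hsum2 : Summable fun m : ℕ => (((m + 1).factorial : ℝ))⁻¹ • (-C) ^ m :=
    (summable_norm_aux _ coeffY_bound _).of_norm
  have hYt : (Ymat N Cs k)ᵀ = ∑' m : ℕ, (((m + 1).factorial : ℝ))⁻¹ • (Cᵀ) ^ m := by
    rw [Ymat, Matrix.transpose_tsum]
    exact tsum_congr fun m => by rw [transpose_smul, transpose_pow]
  have heq : (fun m : ℕ => ((((m + 1).factorial : ℝ))⁻¹ • (Cᵀ) ^ m) * γ)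
      = fun m : ℕ => γ * ((((m + 1).factorial : ℝ))⁻¹ • (-C) ^ m) := by
    funext m
    rw [smul_mul_assoc, hpow m, mul_smul_comm]
  have hYg : (Ymat N Cs k)ᵀ * γ
      = γ * ∑' m : ℕ, (((m + 1).factorial : ℝ))⁻¹ • (-C) ^ m := by
    rw [hYt]
    have h2 := hsum1.hasSum.mul_right γ
    rw [heq] at h2
    exact h2.unique (hsum2.hasSum.mul_left γ)
  have hmain := mainMul (-C)
  rw [Sh_neg] at hmain
  simp only [neg_neg] at hmain
  have hYdef : Ymat N Cs k = ∑' m : ℕ, (((m + 1).factorial : ℝ))⁻¹ • C ^ m := by rw [Ymat]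
  calc ((Ymat N Cs k)ᵀ * γ * Ymat N Cs k).det
      = (γ * ((∑' m : ℕ, (((m + 1).factorial : ℝ))⁻¹ • (-C) ^ m) * Ymat N Cs k)).det := by
        rw [hYg, mul_assoc]
    _ = γ.det * ((∑' m : ℕ, (((m + 1).factorial : ℝ))⁻¹ • (-C) ^ m) * Ymat N Cs k).det := by
        rw [det_mul]
    _ = γ.det * (Sh C ^ 2).det := by rw [hYdef, hmain]
    _ = γ.det * (Sh C).det ^ 2 := by rw [det_pow]
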